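/- The uniform attachment graphon G(α,β) = 1 − max(α,β) on [0,1]² has spectral decomposition G(α,β) = Σ_{k odd} (4/(k²π²)) · 2 cos(πkα/2) cos(πkβ/2); that is, for each odd positive integer k, f_k(x) = √2 cos(πkx/2) is an eigenfunction of the associated integral operator with eigenvalue 4/(k²π²), and these exhaust the nonzero spectrum. -/

import Mathlib

open MeasureTheory Real intervalIntegral

/-- The uniform attachment graphon `1 − max(α,β)`. -/
noncomputable def Gua (α β : ℝ) : ℝ := 1 - max α β

/-- `f_k(x) = √2 cos(πkx/2)`. -/
noncomputable def fua (k : ℕ) : ℝ → ℝ := fun x => Real.sqrt 2 * Real.cos (π * k * x / 2)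

lemma bern2 (x : ℝ) :
    (Polynomial.map (algebraMap ℚ ℝ) (Polynomial.bernoulli 2)).eval x = x^2 - x + 1/6 := by
  simp [Polynomial.bernoulli, Finset.sum_range_succ, Polynomial.eval_monomial]
  norm_num [bernoulli]
  ring

lemma cosFull {x : ℝ} (hx : x ∈ Set.Icc (0:ℝ) 1) :
    HasSum (fun n : ℕ => 1/(n:ℝ)^2 * Real.cos (2*π*n*x)) (π^2 * (x^2 - x + 1/6)) := by
  have h := hasSum_one_div_nat_pow_mul_cos (k := 1) one_ne_zero hx
  have e : ((-1:ℝ)) ^ (1+1) * (2 * π) ^ (2*1) / 2 / (((2*1 : ℕ).factorial : ℝ)) *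
      (Polynomial.map (algebraMap ℚ ℝ) (Polynomial.bernoulli (2*1))).eval x
      = π^2 * (x^2 - x + 1/6) := by
    rw [show (2*1 : ℕ) = 2 from rfl, bern2,
       show (((2:ℕ).factorial :ℝ)) = 2 by norm_num [Nat.factorial]]
    ring
  rw [e] at h
  simpa using h

lemma oddCos {x : ℝ} (hx : x ∈ Set.Icc (0:ℝ) (1/2)) :
    HasSum (fun n : ℕ => if Odd n then 1/(n:ℝ)^2 * Real.cos (2*π*n*x) else 0)
      (π^2/8 - π^2*x/2) := by
  have hx1 : x ∈ Set.Icc (0:ℝ) 1 := ⟨hx.1, hx.2.trans (by norm_num)⟩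
  have hx2 : 2*x ∈ Set.Icc (0:ℝ) 1 := ⟨by linarith [hx.1], by linarith [hx.2]⟩
  have hT := cosFull hx1
  have hE0 := (cosFull hx2).mul_left (1/4)
  set a : ℕ → ℝ := fun n => 1/(n:ℝ)^2 * Real.cos (2*π*n*x) with ha
  have hE : HasSum (fun m : ℕ => a (2*m)) ((1/4) * (π^2 * ((2*x)^2 - 2*x + 1/6))) := by
    refine hE0.congr_fun ?_
    intro m
    simp only [ha]
    push_cast
    rw [show 2*π*(2*(m:ℝ))*x = 2*π*m*(2*x) by ring,
        show (2*(m:ℝ))^2 = 4*(m:ℝ)^2 by ring,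
        show (1:ℝ)/(4*(m:ℝ)^2) = 1/4 * (1/(m:ℝ)^2) by rw [one_div, mul_inv, one_div]; norm_num,
        mul_assoc]
  have hinj : Function.Injective (fun m : ℕ => 2*m) := fun a b h => by
    simp only [] at h; omega
  have hsub : HasSum (fun n => a n - (if Odd n then a n else 0))
      ((1/4) * (π^2 * ((2*x)^2 - 2*x + 1/6))) := by
    rw [← hinj.hasSum_iff ?_]
    · refine hE.congr_fun ?_
      intro m
      simp [Nat.odd_iff]
    · intro n hn
      have hodd : Odd n := by
        rcases Nat.even_or_odd n with he | ho
        · obtain ⟨m, rfl⟩ := he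
          exact absurd ⟨m, show 2*m = m + m by omega⟩ hn
        · exact ho
      simp [hodd]
  have h := hT.sub hsub
  have h2 : HasSum (fun n => if Odd n then a n else 0)
      (π^2 * (x^2 - x + 1/6) - (1/4) * (π^2 * ((2*x)^2 - 2*x + 1/6))) := by
    refine h.congr_fun ?_
    intro n; ring
  convert h2 using 1
  ring

lemma G_hasSum {α β : ℝ} (hα : α ∈ Set.Icc (0:ℝ) 1) (hβ : β ∈ Set.Icc (0:ℝ) 1) :
    HasSum (fun k : ℕ => if Odd k then
      (4 / ((k:ℝ)^2 * π^2)) * 2 * Real.cos (π * k * α / 2) * Real.cos (π * k * β / 2) else 0)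
      (Gua α β) := by
  obtain ⟨hα0, hα1⟩ := hα
  obtain ⟨hβ0, hβ1⟩ := hβ
  have habs : |α - β| ≤ 1 := abs_sub_le_iff.mpr ⟨by linarith, by linarith⟩
  have hu : |α - β|/4 ∈ Set.Icc (0:ℝ) (1/2) :=
    ⟨by positivity, by linarith⟩
  have hv : (α + β)/4 ∈ Set.Icc (0:ℝ) (1/2) := ⟨by linarith, by linarith⟩
  have h1 := (oddCos hu).mul_left (4/π^2)
  have h := h1.add ((oddCos hv).mul_left (4/π^2))
  have hπ : (π:ℝ) ≠ 0 := Real.pi_ne_zero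
  have hconst : 4/π^2 * (π^2/8 - π^2*(|α - β|/4)/2) + 4/π^2 * (π^2/8 - π^2*((α+β)/4)/2)
      = Gua α β := by
    have : 4/π^2 * (π^2/8 - π^2*(|α - β|/4)/2) + 4/π^2 * (π^2/8 - π^2*((α+β)/4)/2)
        = 1 - (|α - β| + (α + β))/2 := by field_simp; ring
    rw [this, Gua]
    rcases le_total α β with hle | hle
    · rw [abs_of_nonpos (by linarith), max_eq_right hle]; ring
    · rw [abs_of_nonneg (by linarith), max_eq_left hle]; ring
  rw [hconst] at h
  refine h.congr_fun ?_
  intro k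
  rcases Nat.even_or_odd k with he | ho
  · have hno : ¬ Odd k := Nat.not_odd_iff_even.mpr he
    simp only [hno, if_false, mul_zero, add_zero]
  · have hkos : (0:ℝ) ≤ π * k / 2 := by positivity
    have harg1 : 2*π*(k:ℝ)*(|α - β|/4) = |π * k * (α - β) / 2| := by
      rw [show π * k * (α - β) / 2 = (π * k / 2) * (α - β) by ring,
        abs_mul, abs_of_nonneg hkos]
      ring
    have harg2 : 2*π*(k:ℝ)*((α+β)/4) = π * k * (α + β) / 2 := by ring
    have hcc : Real.cos (π * k * (α - β) / 2) + Real.cos (π * k * (α + β) / 2)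
        = 2 * Real.cos (π * k * α / 2) * Real.cos (π * k * β / 2) := by
      rw [Real.cos_add_cos,
        show (π*(k:ℝ)*(α-β)/2 + π*(k:ℝ)*(α+β)/2)/2 = π*(k:ℝ)*α/2 by ring,
        show (π*(k:ℝ)*(α-β)/2 - π*(k:ℝ)*(α+β)/2)/2 = -(π*(k:ℝ)*β/2) by ring,
        Real.cos_neg]
    simp only [ho, if_true]
    rw [harg1, harg2, Real.cos_abs]
    rw [show 4/π^2 * (1/(k:ℝ)^2 * Real.cos (π * k * (α - β) / 2))
          + 4/π^2 * (1/(k:ℝ)^2 * Real.cos (π * k * (α + β) / 2))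
        = 4/((k:ℝ)^2 * π^2) * (Real.cos (π * k * (α - β) / 2) + Real.cos (π * k * (α + β) / 2))
        by field_simp, hcc]
    ring

lemma int_cos_mul {c : ℝ} (hc : c ≠ 0) : ∫ x in (0:ℝ)..1, Real.cos (c * x) = Real.sin c / c := by
  have h : ∀ x ∈ Set.uIcc (0:ℝ) 1, HasDerivAt (fun y => Real.sin (c*y) / c) (Real.cos (c*x)) x := by
    intro x _
    have h1 : HasDerivAt (fun y => Real.sin (c*y)) (Real.cos (c*x) * c) x := by
      have h0 := (Real.hasDerivAt_sin (c*x)).comp x ((hasDerivAt_id x).const_mul c)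
      simp only [Function.comp_def, id, mul_one] at h0
      exact h0
    have h2 := h1.div_const c
    simpa [mul_div_assoc, div_self hc] using h2
  have hcont : IntervalIntegrable (fun x => Real.cos (c*x)) volume 0 1 :=
    (Real.continuous_cos.comp (continuous_const.mul continuous_id)).intervalIntegrable 0 1
  have := intervalIntegral.integral_eq_sub_of_hasDerivAt h hcont
  simpa using this

lemma orth (k l : ℕ) (hk : Odd k) (hl : Odd l) :
    (∫ x in (0:ℝ)..1, fua k x * fua l x) = if k = l then 1 else 0 := by
  have h2 : Real.sqrt 2 * Real.sqrt 2 = 2 := Real.mul_self_sqrt (by norm_num)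
  have hπ : (π:ℝ) ≠ 0 := Real.pi_ne_zero
  rcases eq_or_ne k l with rfl | hne
  · simp only [if_pos rfl]
    have hk0 : (k:ℝ) ≠ 0 := Nat.cast_ne_zero.mpr hk.pos.ne'
    have heq : ∀ x : ℝ, fua k x * fua k x = 1 + Real.cos (π * k * x) := by
      intro x
      have := Real.cos_sq (π * k * x / 2)
      unfold fua
      rw [show Real.sqrt 2 * Real.cos (π*k*x/2) * (Real.sqrt 2 * Real.cos (π*k*x/2))
          = (Real.sqrt 2 * Real.sqrt 2) * Real.cos (π*k*x/2)^2 by ring, h2, this]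
      rw [show 2*(π*k*x/2) = π*k*x by ring]
      ring
    rw [intervalIntegral.integral_congr (g := fun x => 1 + Real.cos (π * (k:ℝ) * x))
        (fun x _ => heq x)]
    have hi1 : IntervalIntegrable (fun _ : ℝ => (1:ℝ)) volume 0 1 :=
      intervalIntegrable_const
    have hi2 : IntervalIntegrable (fun x => Real.cos (π * (k:ℝ) * x)) volume 0 1 :=
      (Real.continuous_cos.comp (continuous_const.mul continuous_id)).intervalIntegrable 0 1
    rw [intervalIntegral.integral_add hi1 hi2]
    rw [int_cos_mul (mul_ne_zero hπ hk0)]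
    rw [show π * (k:ℝ) = (k:ℝ) * π by ring, Real.sin_nat_mul_pi]
    simp
  · simp only [if_neg hne]
    have heq : ∀ x : ℝ, fua k x * fua l x
        = Real.cos ((π*((k:ℝ)+l)/2) * x) + Real.cos ((π*((k:ℝ)-l)/2) * x) := by
      intro x
      rw [Real.cos_add_cos,
        show ((π*((k:ℝ)+l)/2)*x + (π*((k:ℝ)-l)/2)*x)/2 = π*k*x/2 by ring,
        show ((π*((k:ℝ)+l)/2)*x - (π*((k:ℝ)-l)/2)*x)/2 = π*l*x/2 by ring]
      unfold fua
      rw [show Real.sqrt 2 * Real.cos (π*k*x/2) * (Real.sqrt 2 * Real.cos (π*l*x/2))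
          = (Real.sqrt 2 * Real.sqrt 2) * (Real.cos (π*k*x/2) * Real.cos (π*l*x/2)) by ring, h2]
      ring
    rw [intervalIntegral.integral_congr (g := fun x =>
        Real.cos ((π*((k:ℝ)+l)/2) * x) + Real.cos ((π*((k:ℝ)-l)/2) * x)) (fun x _ => heq x)]
    have hkl1 : ((k:ℝ) + l) ≠ 0 := by
      have := hk.pos; positivity
    have hkl2 : ((k:ℝ) - l) ≠ 0 := by
      have : (k:ℝ) ≠ l := by exact_mod_cast fun h => hne (Nat.cast_injective h)
      intro h; exact this (by linarith)
    have hc1 : (π*((k:ℝ)+l)/2) ≠ 0 := by positivity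
    have hc2 : (π*((k:ℝ)-l)/2) ≠ 0 := div_ne_zero (mul_ne_zero hπ hkl2) two_ne_zero
    have hi1 : IntervalIntegrable (fun x => Real.cos ((π*((k:ℝ)+l)/2) * x)) volume 0 1 :=
      (Real.continuous_cos.comp (continuous_const.mul continuous_id)).intervalIntegrable 0 1
    have hi2 : IntervalIntegrable (fun x => Real.cos ((π*((k:ℝ)-l)/2) * x)) volume 0 1 :=
      (Real.continuous_cos.comp (continuous_const.mul continuous_id)).intervalIntegrable 0 1
    rw [intervalIntegral.integral_add hi1 hi2, int_cos_mul hc1, int_cos_mul hc2]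
    obtain ⟨a, ha⟩ := hk
    obtain ⟨b, hb⟩ := hl
    have hs1 : Real.sin (π*((k:ℝ)+l)/2) = 0 := by
      rw [show π*((k:ℝ)+l)/2 = ((a:ℝ)+b+1) * π by push_cast [ha, hb]; ring]
      have : ((a:ℝ)+b+1) = ((a+b+1 : ℕ) : ℝ) := by push_cast; ring
      rw [this, Real.sin_nat_mul_pi]
    have hs2 : Real.sin (π*((k:ℝ)-l)/2) = 0 := by
      rw [show π*((k:ℝ)-l)/2 = ((a:ℝ)-b) * π by push_cast [ha, hb]; ring]
      have : ((a:ℝ)-b) = (((a:ℤ)-b : ℤ) : ℝ) := by push_cast; ring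
      rw [this, Real.sin_int_mul_pi]
    rw [hs1, hs2]
    simp

lemma key {α : ℝ} (hα : α ∈ Set.Icc (0:ℝ) 1) {f : ℝ → ℝ}
    (hf : IntervalIntegrable f volume 0 1) :
    (∫ β in (0:ℝ)..1, Gua α β * f β)
      = ∑' k : ℕ, (if Odd k then (4 / ((k:ℝ)^2 * π^2)) * 2 * Real.cos (π * k * α / 2) else 0)
          * ∫ β in Set.Ioc (0:ℝ) 1, Real.cos (π * (k:ℝ) * β / 2) * f β := by
  set c : ℕ → ℝ := fun k =>
    if Odd k then (4 / ((k:ℝ)^2 * π^2)) * 2 * Real.cos (π * k * α / 2) else 0 with hc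
  have hπ : (0:ℝ) < π := Real.pi_pos
  have hfI : IntegrableOn f (Set.Ioc (0:ℝ) 1) volume := hf.1
  have hgI : ∀ k : ℕ, Integrable (fun β => Real.cos (π * (k:ℝ) * β / 2) * f β)
      (volume.restrict (Set.Ioc (0:ℝ) 1)) := by
    intro k
    exact hfI.bdd_mul (c := 1)
      ((Real.continuous_cos.comp (by continuity)).aestronglyMeasurable)
      (ae_of_all _ fun x => by simpa using Real.abs_cos_le_one _)
  have hFint : ∀ k : ℕ, Integrable
      (fun β => c k * (Real.cos (π * (k:ℝ) * β / 2) * f β))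
      (volume.restrict (Set.Ioc (0:ℝ) 1)) := fun k => (hgI k).const_mul _
  have hcb : ∀ k : ℕ, |c k| ≤ 8/π^2 * (1/(k:ℝ)^2) := by
    intro k
    rcases Nat.even_or_odd k with he | ho
    · have : ¬ Odd k := Nat.not_odd_iff_even.mpr he
      simp only [hc, this, if_false, abs_zero]
      positivity
    · have hk0 : (0:ℝ) < (k:ℝ) := by exact_mod_cast ho.pos
      simp only [hc, ho, if_true]
      rw [abs_mul]
      calc |4 / ((k:ℝ)^2 * π^2) * 2| * |Real.cos (π * k * α / 2)|
          ≤ |4 / ((k:ℝ)^2 * π^2) * 2| * 1 :=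
            mul_le_mul_of_nonneg_left (Real.abs_cos_le_one _) (abs_nonneg _)
        _ = 8/π^2 * (1/(k:ℝ)^2) := by
            rw [mul_one, abs_of_nonneg (by positivity)]
            field_simp
            ring
  have hFsum : Summable fun k : ℕ =>
      ∫ β in Set.Ioc (0:ℝ) 1, ‖c k * (Real.cos (π * (k:ℝ) * β / 2) * f β)‖ := by
    have hs : Summable fun k : ℕ => 8/π^2 * (1/(k:ℝ)^2) * ∫ β in Set.Ioc (0:ℝ) 1, ‖f β‖ :=
      ((Real.summable_one_div_nat_pow.mpr one_lt_two).mul_left (8/π^2)).mul_right _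
    refine Summable.of_nonneg_of_le (fun k => integral_nonneg (fun β => norm_nonneg _)) ?_ hs
    intro k
    calc (∫ β in Set.Ioc (0:ℝ) 1, ‖c k * (Real.cos (π * (k:ℝ) * β / 2) * f β)‖)
        ≤ ∫ β in Set.Ioc (0:ℝ) 1, 8/π^2 * (1/(k:ℝ)^2) * ‖f β‖ := by
          refine integral_mono ((hFint k).norm) (hfI.norm.const_mul _) ?_
          intro β
          simp only [norm_mul]
          calc ‖c k‖ * (‖Real.cos (π * (k:ℝ) * β / 2)‖ * ‖f β‖)
              ≤ |c k| * (1 * ‖f β‖) := by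
                refine mul_le_mul_of_nonneg_left ?_ (abs_nonneg _)
                exact mul_le_mul_of_nonneg_right (Real.abs_cos_le_one _) (norm_nonneg _)
            _ ≤ 8/π^2 * (1/(k:ℝ)^2) * ‖f β‖ := by
                rw [one_mul]
                exact mul_le_mul_of_nonneg_right (hcb k) (norm_nonneg _)
      _ = 8/π^2 * (1/(k:ℝ)^2) * ∫ β in Set.Ioc (0:ℝ) 1, ‖f β‖ := by
          rw [MeasureTheory.integral_const_mul]
  rw [intervalIntegral.integral_of_le zero_le_one]
  have step1 : (∫ β in Set.Ioc (0:ℝ) 1, Gua α β * f β)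
      = ∫ β in Set.Ioc (0:ℝ) 1, ∑' k : ℕ, c k * (Real.cos (π * (k:ℝ) * β / 2) * f β) := by
    refine setIntegral_congr_fun measurableSet_Ioc ?_
    intro β hβ
    have hβ' : β ∈ Set.Icc (0:ℝ) 1 := Set.Ioc_subset_Icc_self hβ
    show Gua α β * f β = _
    rw [← (G_hasSum hα hβ').tsum_eq, ← tsum_mul_right]
    congr 1
    funext k
    rcases Nat.even_or_odd k with he | ho
    · have : ¬ Odd k := Nat.not_odd_iff_even.mpr he
      simp [hc, this]
    · simp only [hc, ho, if_true]
      ring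
  rw [step1, ← MeasureTheory.integral_tsum_of_summable_integral_norm hFint hFsum]
  congr 1
  funext k
  rw [MeasureTheory.integral_const_mul]

/-- Spectral decomposition of the uniform attachment graphon: for each odd `k`,
`√2 cos(πkx/2)` is an eigenfunction with eigenvalue `4/(k²π²)`, these are
orthonormal in `L²[0,1]`, the kernel equals the corresponding series, and any
`f` orthogonal to all of them is annihilated by the integral operator (so they
exhaust the nonzero spectrum). -/
theorem stmt_13 :
    (∀ k : ℕ, Odd k → ∀ α ∈ Set.Icc (0:ℝ) 1,
      (∫ β in (0:ℝ)..1, Gua α β * fua k β) = (4 / ((k:ℝ)^2 * π^2)) * fua k α) ∧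
    (∀ k l : ℕ, Odd k → Odd l →
      (∫ x in (0:ℝ)..1, fua k x * fua l x) = if k = l then 1 else 0) ∧
    (∀ α ∈ Set.Icc (0:ℝ) 1, ∀ β ∈ Set.Icc (0:ℝ) 1,
      Gua α β = ∑' k : ℕ, if Odd k then
        (4 / ((k:ℝ)^2 * π^2)) * 2 * Real.cos (π * k * α / 2) * Real.cos (π * k * β / 2)
      else 0) ∧
    (∀ f : ℝ → ℝ, IntervalIntegrable f volume 0 1 →
      (∀ k : ℕ, Odd k → (∫ x in (0:ℝ)..1, f x * fua k x) = 0) →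
      ∀ α ∈ Set.Icc (0:ℝ) 1, (∫ β in (0:ℝ)..1, Gua α β * f β) = 0) := by
  have hs2 : Real.sqrt 2 ≠ 0 := by positivity
  have h22 : Real.sqrt 2 * Real.sqrt 2 = 2 := Real.mul_self_sqrt (by norm_num)
  refine ⟨?_, ?_, ?_, ?_⟩
  · -- eigenfunction property
    intro k hk α hα
    have hfk : IntervalIntegrable (fua k) volume 0 1 := by
      apply Continuous.intervalIntegrable
      unfold fua
      continuity
    rw [key hα hfk]
    have htwo : ∀ c d : ℝ, c * 2 * d * (1 / Real.sqrt 2) = c * (Real.sqrt 2 * d) := by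
      intro c d
      rw [show c * 2 * d * (1/Real.sqrt 2) = c * d * (2 / Real.sqrt 2) by ring,
          show (2:ℝ)/Real.sqrt 2 = Real.sqrt 2 by rw [eq_comm, eq_div_iff hs2]; exact h22]
      ring
    have hJ : ∀ l : ℕ, Odd l →
        (∫ β in Set.Ioc (0:ℝ) 1, Real.cos (π * (l:ℝ) * β / 2) * fua k β)
          = (1/Real.sqrt 2) * (if l = k then 1 else 0) := by
      intro l hl
      have := orth l k hl hk
      rw [intervalIntegral.integral_of_le zero_le_one] at this
      rw [← this, ← MeasureTheory.integral_const_mul]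
      refine setIntegral_congr_fun measurableSet_Ioc ?_
      intro β _
      show Real.cos (π * (l:ℝ) * β / 2) * fua k β = (1/Real.sqrt 2) * (fua l β * fua k β)
      unfold fua
      field_simp
    have hterm : ∀ l : ℕ,
        (if Odd l then (4 / ((l:ℝ)^2 * π^2)) * 2 * Real.cos (π * l * α / 2) else 0)
          * (∫ β in Set.Ioc (0:ℝ) 1, Real.cos (π * (l:ℝ) * β / 2) * fua k β)
        = if l = k then (4 / ((k:ℝ)^2 * π^2)) * fua k α else 0 := by
      intro l
      rcases Nat.even_or_odd l with he | ho
      · have hno : ¬ Odd l := Nat.not_odd_iff_even.mpr he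
        have hne : l ≠ k := by rintro rfl; exact hno hk
        simp [hno, hne]
      · rw [hJ l ho]
        rcases eq_or_ne l k with rfl | hne
        · simp only [ho, if_true, if_pos rfl]
          unfold fua
          rw [mul_one]
          exact htwo _ _
        · simp [ho, hne]
    rw [tsum_congr hterm, tsum_ite_eq]
  · -- orthonormality
    exact fun k l hk hl => orth k l hk hl
  · -- kernel series
    intro α hα β hβ
    exact (G_hasSum hα hβ).tsum_eq.symm
  · -- completeness
    intro f hf horth α hα
    rw [key hα hf]
    have hterm : ∀ k : ℕ,
        (if Odd k then (4 / ((k:ℝ)^2 * π^2)) * 2 * Real.cos (π * k * α / 2) else 0)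
          * (∫ β in Set.Ioc (0:ℝ) 1, Real.cos (π * (k:ℝ) * β / 2) * f β) = 0 := by
      intro k
      rcases Nat.even_or_odd k with he | ho
      · have hno : ¬ Odd k := Nat.not_odd_iff_even.mpr he
        simp [hno]
      · have h0 := horth k ho
        rw [intervalIntegral.integral_of_le zero_le_one] at h0
        have : (∫ β in Set.Ioc (0:ℝ) 1, Real.cos (π * (k:ℝ) * β / 2) * f β) = 0 := by
          have heq : (∫ β in Set.Ioc (0:ℝ) 1, f β * fua k β)
              = Real.sqrt 2 * ∫ β in Set.Ioc (0:ℝ) 1, Real.cos (π * (k:ℝ) * β / 2) * f β := by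
            rw [← MeasureTheory.integral_const_mul]
            refine setIntegral_congr_fun measurableSet_Ioc ?_
            intro β _
            show f β * fua k β = Real.sqrt 2 * (Real.cos (π * (k:ℝ) * β / 2) * f β)
            unfold fua
            ring
          rw [heq] at h0
          exact (mul_eq_zero.mp h0).resolve_left hs2
        rw [this, mul_zero]
    rw [tsum_congr hterm, tsum_zero]
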